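/- Suppose Γ is a graph on n ≥ 4 vertices whose first four vertices form a set C partitioned as C₁ ∪ C₂ with |C₁| = |C₂| = 2, and the hypotheses of both Godsil–McKay switching (with partition C, D) and WQH switching (with partition C₁, C₂, D) are satisfied, where D is the set of remaining vertices. Then the graph obtained by GM switching and the graph obtained by WQH switching are isomorphic. -/
import Mathlib

open SimpleGraph Finset

lemma card_inter_pair {V : Type*} [DecidableEq V] (S : Finset V) {c d : V} (h : c ≠ d) :
    (S ∩ {c, d}).card = (if c ∈ S then 1 else 0) + (if d ∈ S then 1 else 0) := by
  rw [Finset.inter_comm, ← Finset.filter_mem_eq_inter, Finset.filter_insert,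
    Finset.filter_singleton]
  split_ifs <;> simp_all [Finset.card_insert_of_notMem, h]

lemma inter_union_eq_left_iff {V : Type*} [DecidableEq V] {a b c d : V}
    (hac : a ≠ c) (had : a ≠ d) (hbc : b ≠ c) (hbd : b ≠ d) (N : Finset V) :
    N ∩ ({a, b} ∪ {c, d}) = {a, b} ↔ (a ∈ N ∧ b ∈ N ∧ c ∉ N ∧ d ∉ N) := by
  constructor
  · intro h
    have ha : a ∈ N ∩ ({a, b} ∪ {c, d} : Finset V) := by rw [h]; simp
    have hb : b ∈ N ∩ ({a, b} ∪ {c, d} : Finset V) := by rw [h]; simp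
    refine ⟨(Finset.mem_inter.mp ha).1, (Finset.mem_inter.mp hb).1, ?_, ?_⟩
    · intro hc
      have hc' : c ∈ ({a, b} : Finset V) := by
        rw [← h]; exact Finset.mem_inter.mpr ⟨hc, by simp⟩
      simp only [Finset.mem_insert, Finset.mem_singleton] at hc'
      rcases hc' with h' | h'
      · exact hac h'.symm
      · exact hbc h'.symm
    · intro hd
      have hd' : d ∈ ({a, b} : Finset V) := by
        rw [← h]; exact Finset.mem_inter.mpr ⟨hd, by simp⟩
      simp only [Finset.mem_insert, Finset.mem_singleton] at hd'
      rcases hd' with h' | h'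
      · exact had h'.symm
      · exact hbd h'.symm
  · rintro ⟨h1, h2, h3, h4⟩
    ext x
    simp only [Finset.mem_inter, Finset.mem_union, Finset.mem_insert, Finset.mem_singleton]
    constructor
    · rintro ⟨hxN, (rfl | rfl) | (rfl | rfl)⟩
      · exact Or.inl rfl
      · exact Or.inr rfl
      · exact absurd hxN h3
      · exact absurd hxN h4
    · rintro (rfl | rfl)
      · exact ⟨h1, Or.inl (Or.inl rfl)⟩
      · exact ⟨h2, Or.inl (Or.inr rfl)⟩


lemma cross_iff {p q r s : Prop} [Decidable p] [Decidable q] [Decidable r] [Decidable s]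
    {k K : ℕ}
    (ha : k + ((if p then 1 else 0) + (if q then 1 else 0)) = K)
    (hb : k + ((if r then 1 else 0) + (if s then 1 else 0)) = K)
    (hc : ((if p then 1 else 0) + (if r then 1 else 0)) + k = K)
    (hd : ((if q then 1 else 0) + (if s then 1 else 0)) + k = K) :
    (p ↔ s) ∧ (q ↔ r) := by
  by_cases hp : p <;> by_cases hq : q <;> by_cases hr : r <;> by_cases hs : s <;>
    simp_all <;> omega

lemma one_each {p q r s : Prop} [Decidable p] [Decidable q] [Decidable r] [Decidable s]
    (hcnt : ((if p then 1 else 0) + (if q then 1 else 0) : ℕ) =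
      (if r then 1 else 0) + (if s then 1 else 0))
    (htot : (((if p then 1 else 0) + (if q then 1 else 0)) +
      ((if r then 1 else 0) + (if s then 1 else 0)) : ℕ) = 2) :
    (p ↔ ¬ q) ∧ (r ↔ ¬ s) := by
  by_cases hp : p <;> by_cases hq : q <;> by_cases hr : r <;> by_cases hs : s <;>
    simp_all <;> omega

set_option maxHeartbeats 1600000 in
/-- If the hypotheses of both GM switching (with the 4-set `C = C₁ ∪ C₂`) and
WQH switching (with the 2-sets `C₁`, `C₂`) hold, then the two switched graphs
are isomorphic. -/
theorem gm_iso_wqh {V : Type*} [Fintype V] [DecidableEq V]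
    (Γ Γgm Γwqh : SimpleGraph V)
    [DecidableRel Γ.Adj] [DecidableRel Γgm.Adj] [DecidableRel Γwqh.Adj]
    (C₁ C₂ : Finset V) (hdisj : Disjoint C₁ C₂)
    (hC₁ : C₁.card = 2) (hC₂ : C₂.card = 2)
    -- GM hypotheses for `C = C₁ ∪ C₂`
    (kC : ℕ)
    (hregC : ∀ v ∈ C₁ ∪ C₂, (Γ.neighborFinset v ∩ (C₁ ∪ C₂)).card = kC)
    (hDgm : ∀ x ∉ C₁ ∪ C₂, (Γ.neighborFinset x ∩ (C₁ ∪ C₂)).card = 0 ∨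
      (Γ.neighborFinset x ∩ (C₁ ∪ C₂)).card = 2 ∨
      (Γ.neighborFinset x ∩ (C₁ ∪ C₂)).card = 4)
    -- WQH hypotheses
    (k₁ : ℕ)
    (hreg₁ : ∀ v ∈ C₁, (Γ.neighborFinset v ∩ C₁).card = k₁)
    (hreg₂ : ∀ v ∈ C₂, (Γ.neighborFinset v ∩ C₂).card = k₁)
    (hDwqh : ∀ x ∉ C₁ ∪ C₂,
      (Γ.neighborFinset x ∩ C₁).card = (Γ.neighborFinset x ∩ C₂).card ∨
      Γ.neighborFinset x ∩ (C₁ ∪ C₂) = C₁ ∨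
      Γ.neighborFinset x ∩ (C₁ ∪ C₂) = C₂)
    -- `Γgm` is the graph obtained by GM switching
    (hgm : ∀ u v, Γgm.Adj u v ↔
      (if (u ∈ C₁ ∪ C₂ ∧ v ∉ C₁ ∪ C₂ ∧
            (Γ.neighborFinset v ∩ (C₁ ∪ C₂)).card = 2) ∨
          (v ∈ C₁ ∪ C₂ ∧ u ∉ C₁ ∪ C₂ ∧
            (Γ.neighborFinset u ∩ (C₁ ∪ C₂)).card = 2)
        then ¬ Γ.Adj u v else Γ.Adj u v))
    -- `Γwqh` is the graph obtained by WQH switching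
    (hwqh : ∀ u v, Γwqh.Adj u v ↔
      (if (u ∈ C₁ ∪ C₂ ∧ v ∉ C₁ ∪ C₂ ∧
            (Γ.neighborFinset v ∩ (C₁ ∪ C₂) = C₁ ∨
             Γ.neighborFinset v ∩ (C₁ ∪ C₂) = C₂)) ∨
          (v ∈ C₁ ∪ C₂ ∧ u ∉ C₁ ∪ C₂ ∧
            (Γ.neighborFinset u ∩ (C₁ ∪ C₂) = C₁ ∨
             Γ.neighborFinset u ∩ (C₁ ∪ C₂) = C₂))
        then ¬ Γ.Adj u v else Γ.Adj u v)) :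
    Nonempty (Γgm ≃g Γwqh) := by
  classical
  obtain ⟨a, b, hab, hC1⟩ := Finset.card_eq_two.mp hC₁
  obtain ⟨c, d, hcd, hC2⟩ := Finset.card_eq_two.mp hC₂
  subst hC1; subst hC2
  have hmemd : ∀ x, x ∈ ({a, b} : Finset V) → x ∉ ({c, d} : Finset V) :=
    fun x hx => Finset.disjoint_left.mp hdisj hx
  have hac : a ≠ c := fun h => hmemd a (by simp) (by simp [h])
  have had : a ≠ d := fun h => hmemd a (by simp) (by simp [h])
  have hbc : b ≠ c := fun h => hmemd b (by simp) (by simp [h])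
  have hbd : b ≠ d := fun h => hmemd b (by simp) (by simp [h])
  set e : Equiv.Perm V := (Equiv.swap a b).trans (Equiv.swap c d) with he
  have hea : e a = b := by
    rw [he]
    rw [Equiv.trans_apply, Equiv.swap_apply_left]
    exact Equiv.swap_apply_of_ne_of_ne hbc hbd
  have heb : e b = a := by
    rw [he]
    rw [Equiv.trans_apply, Equiv.swap_apply_right]
    exact Equiv.swap_apply_of_ne_of_ne hac had
  have hec : e c = d := by
    rw [he]
    rw [Equiv.trans_apply, Equiv.swap_apply_of_ne_of_ne hac.symm hbc.symm]
    exact Equiv.swap_apply_left c d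
  have hed : e d = c := by
    rw [he]
    rw [Equiv.trans_apply, Equiv.swap_apply_of_ne_of_ne had.symm hbd.symm]
    exact Equiv.swap_apply_right c d
  have memC : ∀ x, x ∈ ({a, b} : Finset V) ∪ {c, d} ↔ (x = a ∨ x = b ∨ x = c ∨ x = d) := by
    intro x
    simp only [Finset.mem_union, Finset.mem_insert, Finset.mem_singleton, or_assoc]
  have hfix : ∀ x, x ∉ ({a, b} : Finset V) ∪ {c, d} → e x = x := by
    intro x hx
    rw [memC] at hx
    push_neg at hx
    obtain ⟨h1, h2, h3, h4⟩ := hx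
    rw [he, Equiv.trans_apply, Equiv.swap_apply_of_ne_of_ne h1 h2,
      Equiv.swap_apply_of_ne_of_ne h3 h4]
  have hemem : ∀ x, x ∈ ({a, b} : Finset V) ∪ {c, d} → e x ∈ ({a, b} : Finset V) ∪ {c, d} := by
    intro x hx
    rcases (memC x).mp hx with rfl | rfl | rfl | rfl <;>
      simp [hea, heb, hec, hed, memC]
  have hs : ∀ x y : V, Γ.Adj x y ↔ Γ.Adj y x := fun x y => Γ.adj_comm x y
  have hmemN : ∀ x y : V, x ∈ Γ.neighborFinset y ↔ Γ.Adj y x :=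
    fun x y => SimpleGraph.mem_neighborFinset ..
  have hcardN : ∀ N : Finset V, (N ∩ ({a, b} ∪ {c, d})).card =
      (N ∩ {a, b}).card + (N ∩ {c, d}).card := by
    intro N
    rw [Finset.inter_union_distrib_left,
      Finset.card_union_of_disjoint
        (hdisj.mono Finset.inter_subset_right Finset.inter_subset_right)]
  -- cross-degree equations for the induced subgraph on C
  have ha2 : k₁ + ((if Γ.Adj a c then 1 else 0) + (if Γ.Adj a d then 1 else 0)) = kC := by
    have h := hregC a (by simp)
    rw [hcardN, hreg₁ a (by simp), card_inter_pair _ hcd] at h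
    simpa [hmemN] using h
  have hb2 : k₁ + ((if Γ.Adj b c then 1 else 0) + (if Γ.Adj b d then 1 else 0)) = kC := by
    have h := hregC b (by simp)
    rw [hcardN, hreg₁ b (by simp), card_inter_pair _ hcd] at h
    simpa [hmemN] using h
  have hc2 : ((if Γ.Adj a c then 1 else 0) + (if Γ.Adj b c then 1 else 0)) + k₁ = kC := by
    have h := hregC c (by simp)
    rw [hcardN, hreg₂ c (by simp), card_inter_pair _ hab] at h
    simpa [hmemN, hs c a, hs c b] using h
  have hd2 : ((if Γ.Adj a d then 1 else 0) + (if Γ.Adj b d then 1 else 0)) + k₁ = kC := by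
    have h := hregC d (by simp)
    rw [hcardN, hreg₂ d (by simp), card_inter_pair _ hab] at h
    simpa [hmemN, hs d a, hs d b] using h
  obtain ⟨h1, h2⟩ : (Γ.Adj a c ↔ Γ.Adj b d) ∧ (Γ.Adj a d ↔ Γ.Adj b c) :=
    cross_iff ha2 hb2 hc2 hd2
  have hind : ∀ u v, u ∈ ({a, b} : Finset V) ∪ {c, d} → v ∈ ({a, b} : Finset V) ∪ {c, d} →
      (Γ.Adj (e u) (e v) ↔ Γ.Adj u v) := by
    have h1' : Γ.Adj c a ↔ Γ.Adj d b := by rw [hs c a, hs d b]; exact h1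
    have h2' : Γ.Adj d a ↔ Γ.Adj c b := by rw [hs d a, hs c b]; exact h2
    intro u v hu hv
    rcases (memC u).mp hu with rfl | rfl | rfl | rfl <;>
      rcases (memC v).mp hv with rfl | rfl | rfl | rfl <;>
      simp only [hea, heb, hec, hed] <;>
      first
        | exact iff_of_false (Γ.irrefl) (Γ.irrefl)
        | exact hs _ _
        | exact h1 | exact h1.symm | exact h2 | exact h2.symm
        | exact h1' | exact h1'.symm | exact h2' | exact h2'.symm
  have hCU4 : (({a, b} : Finset V) ∪ {c, d}).card = 4 := by
    rw [Finset.card_union_of_disjoint hdisj, hC₁, hC₂]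
  -- the key lemma for mixed edges
  have key : ∀ v, v ∉ ({a, b} : Finset V) ∪ {c, d} → ∀ u, u ∈ ({a, b} : Finset V) ∪ {c, d} →
      ((if Γ.neighborFinset v ∩ ({a, b} ∪ {c, d}) = {a, b} ∨
            Γ.neighborFinset v ∩ ({a, b} ∪ {c, d}) = {c, d}
          then ¬ Γ.Adj (e u) v else Γ.Adj (e u) v) ↔
        (if (Γ.neighborFinset v ∩ ({a, b} ∪ {c, d})).card = 2
          then ¬ Γ.Adj u v else Γ.Adj u v)) := by
    intro v hv u hu
    have hAu : Γ.Adj u v ↔ u ∈ Γ.neighborFinset v := by rw [hmemN, hs]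
    have hAeu : Γ.Adj (e u) v ↔ e u ∈ Γ.neighborFinset v := by rw [hmemN, hs]
    have hEq1 := inter_union_eq_left_iff hac had hbc hbd (Γ.neighborFinset v)
    have hEq2 : Γ.neighborFinset v ∩ ({a, b} ∪ {c, d}) = {c, d} ↔
        (c ∈ Γ.neighborFinset v ∧ d ∈ Γ.neighborFinset v ∧
          a ∉ Γ.neighborFinset v ∧ b ∉ Γ.neighborFinset v) := by
      rw [Finset.union_comm]
      exact inter_union_eq_left_iff hac.symm hbc.symm had.symm hbd.symm (Γ.neighborFinset v)
    split_ifs with hQ hP hP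
    · -- both switch
      rw [hAu, hAeu]
      rcases hQ with h | h
      · obtain ⟨m1, m2, m3, m4⟩ := hEq1.mp h
        rcases (memC u).mp hu with rfl | rfl | rfl | rfl <;>
          simp [hea, heb, hec, hed, m1, m2, m3, m4]
      · obtain ⟨m1, m2, m3, m4⟩ := hEq2.mp h
        rcases (memC u).mp hu with rfl | rfl | rfl | rfl <;>
          simp [hea, heb, hec, hed, m1, m2, m3, m4]
    · -- WQH switches but GM does not: impossible
      exfalso; apply hP
      rcases hQ with h | h <;> rw [h]
      · exact hC₁
      · exact hC₂
    · -- GM switches but WQH does not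
      rcases hDwqh v hv with hcnt | h | h
      · rw [card_inter_pair _ hab, card_inter_pair _ hcd] at hcnt
        rw [hcardN, card_inter_pair _ hab, card_inter_pair _ hcd] at hP
        rw [hAu, hAeu]
        obtain ⟨hA, hC⟩ := one_each hcnt hP
        rcases (memC u).mp hu with rfl | rfl | rfl | rfl <;>
          simp only [hea, heb, hec, hed] <;>
          first
            | exact hA
            | exact hC
            | exact iff_not_comm.mp hA
            | exact iff_not_comm.mp hC
      · exact absurd (Or.inl h) hQ
      · exact absurd (Or.inr h) hQ
    · -- no switch on either side
      rcases hDgm v hv with h0 | hcc | h4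
      · have hempty : Γ.neighborFinset v ∩ ({a, b} ∪ {c, d}) = ∅ := Finset.card_eq_zero.mp h0
        rw [hAu, hAeu]
        have hnu : u ∉ Γ.neighborFinset v := by
          intro hmem
          have : u ∈ Γ.neighborFinset v ∩ ({a, b} ∪ {c, d}) := Finset.mem_inter.mpr ⟨hmem, hu⟩
          rw [hempty] at this; exact absurd this (Finset.notMem_empty u)
        have hneu : e u ∉ Γ.neighborFinset v := by
          intro hmem
          have : e u ∈ Γ.neighborFinset v ∩ ({a, b} ∪ {c, d}) :=
            Finset.mem_inter.mpr ⟨hmem, hemem u hu⟩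
          rw [hempty] at this; exact absurd this (Finset.notMem_empty _)
        simp [hnu, hneu]
      · exact absurd hcc hP
      · have hfull : Γ.neighborFinset v ∩ ({a, b} ∪ {c, d}) = ({a, b} : Finset V) ∪ {c, d} :=
          Finset.eq_of_subset_of_card_le Finset.inter_subset_right (by rw [h4, hCU4])
        rw [hAu, hAeu]
        have hyu : u ∈ Γ.neighborFinset v := by
          have : u ∈ Γ.neighborFinset v ∩ ({a, b} ∪ {c, d}) := by rw [hfull]; exact hu
          exact (Finset.mem_inter.mp this).1
        have hyeu : e u ∈ Γ.neighborFinset v := by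
          have : e u ∈ Γ.neighborFinset v ∩ ({a, b} ∪ {c, d}) := by
            rw [hfull]; exact hemem u hu
          exact (Finset.mem_inter.mp this).1
        simp [hyu, hyeu]
  -- assemble the isomorphism
  refine ⟨⟨e, ?_⟩⟩
  intro u v
  rw [hwqh, hgm]
  by_cases hu : u ∈ ({a, b} : Finset V) ∪ {c, d} <;>
    by_cases hv : v ∈ ({a, b} : Finset V) ∪ {c, d}
  · -- both in C
    have hneg1 : ¬ ((e u ∈ ({a, b} : Finset V) ∪ {c, d} ∧ e v ∉ ({a, b} : Finset V) ∪ {c, d} ∧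
        (Γ.neighborFinset (e v) ∩ ({a, b} ∪ {c, d}) = {a, b} ∨
         Γ.neighborFinset (e v) ∩ ({a, b} ∪ {c, d}) = {c, d})) ∨
        (e v ∈ ({a, b} : Finset V) ∪ {c, d} ∧ e u ∉ ({a, b} : Finset V) ∪ {c, d} ∧
        (Γ.neighborFinset (e u) ∩ ({a, b} ∪ {c, d}) = {a, b} ∨
         Γ.neighborFinset (e u) ∩ ({a, b} ∪ {c, d}) = {c, d}))) := by
      rintro (⟨_, h, _⟩ | ⟨_, h, _⟩)
      · exact h (hemem v hv)
      · exact h (hemem u hu)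
    have hneg2 : ¬ ((u ∈ ({a, b} : Finset V) ∪ {c, d} ∧ v ∉ ({a, b} : Finset V) ∪ {c, d} ∧
        (Γ.neighborFinset v ∩ ({a, b} ∪ {c, d})).card = 2) ∨
        (v ∈ ({a, b} : Finset V) ∪ {c, d} ∧ u ∉ ({a, b} : Finset V) ∪ {c, d} ∧
        (Γ.neighborFinset u ∩ ({a, b} ∪ {c, d})).card = 2)) := by
      rintro (⟨_, h, _⟩ | ⟨_, h, _⟩)
      · exact h hv
      · exact h hu
    rw [if_neg hneg1, if_neg hneg2]
    exact hind u v hu hv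
  · -- u ∈ C, v ∉ C
    rw [hfix v hv]
    have heu : e u ∈ ({a, b} : Finset V) ∪ {c, d} := hemem u hu
    have hcw : ((e u ∈ ({a, b} : Finset V) ∪ {c, d} ∧ v ∉ ({a, b} : Finset V) ∪ {c, d} ∧
        (Γ.neighborFinset v ∩ ({a, b} ∪ {c, d}) = {a, b} ∨
         Γ.neighborFinset v ∩ ({a, b} ∪ {c, d}) = {c, d})) ∨
        (v ∈ ({a, b} : Finset V) ∪ {c, d} ∧ e u ∉ ({a, b} : Finset V) ∪ {c, d} ∧
        (Γ.neighborFinset (e u) ∩ ({a, b} ∪ {c, d}) = {a, b} ∨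
         Γ.neighborFinset (e u) ∩ ({a, b} ∪ {c, d}) = {c, d}))) ↔
        (Γ.neighborFinset v ∩ ({a, b} ∪ {c, d}) = {a, b} ∨
         Γ.neighborFinset v ∩ ({a, b} ∪ {c, d}) = {c, d}) := by
      constructor
      · rintro (⟨_, _, h⟩ | ⟨h, _, _⟩)
        · exact h
        · exact absurd h hv
      · intro h; exact Or.inl ⟨heu, hv, h⟩
    have hcg : ((u ∈ ({a, b} : Finset V) ∪ {c, d} ∧ v ∉ ({a, b} : Finset V) ∪ {c, d} ∧
        (Γ.neighborFinset v ∩ ({a, b} ∪ {c, d})).card = 2) ∨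
        (v ∈ ({a, b} : Finset V) ∪ {c, d} ∧ u ∉ ({a, b} : Finset V) ∪ {c, d} ∧
        (Γ.neighborFinset u ∩ ({a, b} ∪ {c, d})).card = 2)) ↔
        (Γ.neighborFinset v ∩ ({a, b} ∪ {c, d})).card = 2 := by
      constructor
      · rintro (⟨_, _, h⟩ | ⟨h, _, _⟩)
        · exact h
        · exact absurd h hv
      · intro h; exact Or.inl ⟨hu, hv, h⟩
    simp only [hcw, hcg]
    exact key v hv u hu
  · -- u ∉ C, v ∈ C
    rw [hfix u hu]
    have hev : e v ∈ ({a, b} : Finset V) ∪ {c, d} := hemem v hv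
    have hcw : ((u ∈ ({a, b} : Finset V) ∪ {c, d} ∧ e v ∉ ({a, b} : Finset V) ∪ {c, d} ∧
        (Γ.neighborFinset (e v) ∩ ({a, b} ∪ {c, d}) = {a, b} ∨
         Γ.neighborFinset (e v) ∩ ({a, b} ∪ {c, d}) = {c, d})) ∨
        (e v ∈ ({a, b} : Finset V) ∪ {c, d} ∧ u ∉ ({a, b} : Finset V) ∪ {c, d} ∧
        (Γ.neighborFinset u ∩ ({a, b} ∪ {c, d}) = {a, b} ∨
         Γ.neighborFinset u ∩ ({a, b} ∪ {c, d}) = {c, d}))) ↔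
        (Γ.neighborFinset u ∩ ({a, b} ∪ {c, d}) = {a, b} ∨
         Γ.neighborFinset u ∩ ({a, b} ∪ {c, d}) = {c, d}) := by
      constructor
      · rintro (⟨h, _, _⟩ | ⟨_, _, h⟩)
        · exact absurd h hu
        · exact h
      · intro h; exact Or.inr ⟨hev, hu, h⟩
    have hcg : ((u ∈ ({a, b} : Finset V) ∪ {c, d} ∧ v ∉ ({a, b} : Finset V) ∪ {c, d} ∧
        (Γ.neighborFinset v ∩ ({a, b} ∪ {c, d})).card = 2) ∨
        (v ∈ ({a, b} : Finset V) ∪ {c, d} ∧ u ∉ ({a, b} : Finset V) ∪ {c, d} ∧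
        (Γ.neighborFinset u ∩ ({a, b} ∪ {c, d})).card = 2)) ↔
        (Γ.neighborFinset u ∩ ({a, b} ∪ {c, d})).card = 2 := by
      constructor
      · rintro (⟨h, _, _⟩ | ⟨_, _, h⟩)
        · exact absurd h hu
        · exact h
      · intro h; exact Or.inr ⟨hv, hu, h⟩
    simp only [hcw, hcg]
    rw [hs u (e v), hs u v]
    exact key u hu v hv
  · -- both outside C
    rw [hfix u hu, hfix v hv]
    have hneg : ¬ ((u ∈ ({a, b} : Finset V) ∪ {c, d} ∧ v ∉ ({a, b} : Finset V) ∪ {c, d} ∧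
        (Γ.neighborFinset v ∩ ({a, b} ∪ {c, d}) = {a, b} ∨
         Γ.neighborFinset v ∩ ({a, b} ∪ {c, d}) = {c, d})) ∨
        (v ∈ ({a, b} : Finset V) ∪ {c, d} ∧ u ∉ ({a, b} : Finset V) ∪ {c, d} ∧
        (Γ.neighborFinset u ∩ ({a, b} ∪ {c, d}) = {a, b} ∨
         Γ.neighborFinset u ∩ ({a, b} ∪ {c, d}) = {c, d}))) := by
      rintro (⟨h, _, _⟩ | ⟨h, _, _⟩)
      · exact hu h
      · exact hv h
    have hneg2 : ¬ ((u ∈ ({a, b} : Finset V) ∪ {c, d} ∧ v ∉ ({a, b} : Finset V) ∪ {c, d} ∧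
        (Γ.neighborFinset v ∩ ({a, b} ∪ {c, d})).card = 2) ∨
        (v ∈ ({a, b} : Finset V) ∪ {c, d} ∧ u ∉ ({a, b} : Finset V) ∪ {c, d} ∧
        (Γ.neighborFinset u ∩ ({a, b} ∪ {c, d})).card = 2)) := by
      rintro (⟨h, _, _⟩ | ⟨h, _, _⟩)
      · exact hu h
      · exact hv h
    rw [if_neg hneg, if_neg hneg2]
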